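/- arXiv:2107.03877 — 2 statements merged into one kernel-verified Lean document; each statement's English description precedes it below -/
import Mathlib

section
/- Let E and E' be finite-dimensional real normed vector spaces, W ⊆ E an open set, and h : E → E' a map that is continuously differentiable on W, admits a continuously differentiable inverse on its image (i.e., h(W) is open in E' and there is a map g : E' → E, continuously differentiable on h(W), with g(h(z)) = z for all z ∈ W and h(g(z')) = z' for all z' ∈ h(W)). Let X ⊆ E, let x ∈ X ∩ W, and set Y = h(X ∩ W). If Y is Clarke regular at every point of Y — i.e., for every y ∈ Y and every sequence (y_k) in Y converging to y one has T_yY ⊆ liminf_k T_{y_k}Y — then X is Clarke regular at x: for every sequence (x_k) in X converging to x, T_xX ⊆ liminf_k T_{x_k}X. -/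
open Filter Topology

/-- The Bouligand tangent cone of `S` at `p`: vectors `v` for which there are a sequence `(p_k)`
in `S` and positive reals `τ_k → 0` with `(p_k − p)/τ_k → v`. -/
def bTangentCone {E : Type*} [NormedAddCommGroup E] [NormedSpace ℝ E]
    (S : Set E) (p : E) : Set E :=
  {v | ∃ (pk : ℕ → E) (τ : ℕ → ℝ), (∀ k, pk k ∈ S) ∧ (∀ k, 0 < τ k) ∧
    Tendsto τ atTop (𝓝 0) ∧ Tendsto (fun k => (τ k)⁻¹ • (pk k - p)) atTop (𝓝 v)}

/-- The inner limit `liminf_k S_k`: points `u` for which there exist `u_k ∈ S_k` with `u_k → u`. -/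
def innerLimit {E : Type*} [NormedAddCommGroup E] (S : ℕ → Set E) : Set E :=
  {u | ∃ uk : ℕ → E, (∀ k, uk k ∈ S k) ∧ Tendsto uk atTop (𝓝 u)}

open Asymptotics

private lemma btc_tendsto {E : Type*} [NormedAddCommGroup E] [NormedSpace ℝ E]
    {pk : ℕ → E} {τ : ℕ → ℝ} {p v : E} (hpos : ∀ k, 0 < τ k)
    (hτ : Tendsto τ atTop (𝓝 0))
    (hlim : Tendsto (fun k => (τ k)⁻¹ • (pk k - p)) atTop (𝓝 v)) :
    Tendsto pk atTop (𝓝 p) := by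
  have key : ∀ k, pk k = p + τ k • ((τ k)⁻¹ • (pk k - p)) := fun k => by
    rw [smul_smul, mul_inv_cancel₀ (hpos k).ne', one_smul]; abel
  have h2 : Tendsto (fun k => p + τ k • ((τ k)⁻¹ • (pk k - p))) atTop (𝓝 (p + (0:ℝ) • v)) :=
    tendsto_const_nhds.add (hτ.smul hlim)
  rw [zero_smul, add_zero] at h2
  exact h2.congr fun k => (key k).symm

private lemma zero_mem_btc {E : Type*} [NormedAddCommGroup E] [NormedSpace ℝ E]
    {S : Set E} {p : E} (hp : p ∈ S) : (0 : E) ∈ bTangentCone S p := by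
  refine ⟨fun _ => p, fun k => 1 / (k + 1), fun _ => hp, fun k => by positivity,
    tendsto_one_div_add_atTop_nhds_zero_nat, ?_⟩
  simpa using tendsto_const_nhds

private lemma btc_mono {E : Type*} [NormedAddCommGroup E] [NormedSpace ℝ E]
    {S T : Set E} (hST : S ⊆ T) (p : E) : bTangentCone S p ⊆ bTangentCone T p := by
  rintro v ⟨pk, τ, hmem, hpos, hτ, hlim⟩
  exact ⟨pk, τ, fun k => hST (hmem k), hpos, hτ, hlim⟩

private lemma btc_inter_open {E : Type*} [NormedAddCommGroup E] [NormedSpace ℝ E]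
    {S W : Set E} (hW : IsOpen W) {p : E} (hp : p ∈ W) :
    bTangentCone S p ⊆ bTangentCone (S ∩ W) p := by
  rintro v ⟨pk, τ, hmem, hpos, hτ, hlim⟩
  have hpk : Tendsto pk atTop (𝓝 p) := btc_tendsto hpos hτ hlim
  obtain ⟨N, hN⟩ := eventually_atTop.1 (hpk.eventually (hW.eventually_mem hp))
  refine ⟨fun k => pk (k + N), fun k => τ (k + N),
    fun k => ⟨hmem _, hN _ (Nat.le_add_left N k)⟩, fun k => hpos _,
    (tendsto_add_atTop_iff_nat N).2 hτ, (tendsto_add_atTop_iff_nat N).2 hlim⟩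

private lemma btc_image {E E' : Type*} [NormedAddCommGroup E] [NormedSpace ℝ E]
    [NormedAddCommGroup E'] [NormedSpace ℝ E']
    {f : E → E'} {A : E →L[ℝ] E'} {p : E} (hf : HasFDerivAt f A p)
    {S : Set E} {v : E} (hv : v ∈ bTangentCone S p) :
    A v ∈ bTangentCone (f '' S) (f p) := by
  obtain ⟨pk, τ, hmem, hpos, hτ, hlim⟩ := hv
  refine ⟨fun k => f (pk k), τ, fun k => ⟨pk k, hmem k, rfl⟩, hpos, hτ, ?_⟩
  have hpk : Tendsto pk atTop (𝓝 p) := btc_tendsto hpos hτ hlim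
  have hlittle : (fun k => f (pk k) - f p - A (pk k - p)) =o[atTop] (fun k => pk k - p) :=
    hf.isLittleO.comp_tendsto hpk
  have hBigO : (fun k => pk k - p) =O[atTop] τ := by
    rw [isBigO_iff]
    refine ⟨‖v‖ + 1, ?_⟩
    have hev : ∀ᶠ k in atTop, ‖(τ k)⁻¹ • (pk k - p)‖ ≤ ‖v‖ + 1 :=
      (hlim.norm.eventually_le_const (by linarith [norm_nonneg v]))
    filter_upwards [hev] with k hk
    have hτk := hpos k
    have : ‖pk k - p‖ = τ k * ‖(τ k)⁻¹ • (pk k - p)‖ := by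
      rw [norm_smul, norm_inv, Real.norm_of_nonneg hτk.le]
      field_simp
    rw [this, Real.norm_of_nonneg hτk.le]
    nlinarith [hτk]
  have hsmall : (fun k => ‖f (pk k) - f p - A (pk k - p)‖) =o[atTop] τ :=
    (hlittle.trans_isBigO hBigO).norm_left
  have hdiv : Tendsto (fun k => ‖f (pk k) - f p - A (pk k - p)‖ / τ k) atTop (𝓝 0) :=
    hsmall.tendsto_div_nhds_zero
  have hzero : Tendsto (fun k => (τ k)⁻¹ • (f (pk k) - f p - A (pk k - p))) atTop (𝓝 0) := by
    rw [tendsto_zero_iff_norm_tendsto_zero]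
    refine hdiv.congr fun k => ?_
    rw [norm_smul, norm_inv, Real.norm_of_nonneg (hpos k).le, div_eq_inv_mul]
  have hA : Tendsto (fun k => A ((τ k)⁻¹ • (pk k - p))) atTop (𝓝 (A v)) :=
    (A.continuous.tendsto v).comp hlim
  have := hzero.add hA
  rw [zero_add] at this
  refine this.congr fun k => ?_
  simp only [smul_sub, map_smul, map_sub]
  abel

/-- Let `E`, `E'` be finite-dimensional real normed vector spaces, `W ⊆ E` open, and
`h : E → E'` continuously differentiable on `W` with `h(W)` open and a continuously differentiable
inverse `g` on `h(W)`. Let `X ⊆ E`, `x ∈ X ∩ W`, and `Y = h(X ∩ W)`. If `Y` is Clarke regular at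
every point of `Y` (for every `y ∈ Y` and every sequence `(y_k)` in `Y` converging to `y`,
`T_yY ⊆ liminf_k T_{y_k}Y`), then `X` is Clarke regular at `x`: for every sequence `(x_k)` in `X`
converging to `x`, `T_xX ⊆ liminf_k T_{x_k}X`. -/
theorem stmt15 {E E' : Type*}
    [NormedAddCommGroup E] [NormedSpace ℝ E] [FiniteDimensional ℝ E]
    [NormedAddCommGroup E'] [NormedSpace ℝ E'] [FiniteDimensional ℝ E']
    (W : Set E) (hW : IsOpen W) (h : E → E') (g : E' → E)
    (hh : ContDiffOn ℝ 1 h W) (hWopen : IsOpen (h '' W)) (hg : ContDiffOn ℝ 1 g (h '' W))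
    (hgh : ∀ z ∈ W, g (h z) = z) (hhg : ∀ z' ∈ h '' W, h (g z') = z')
    (X : Set E) (x : E) (hx : x ∈ X ∩ W)
    (hreg : ∀ y ∈ h '' (X ∩ W), ∀ yk : ℕ → E', (∀ k, yk k ∈ h '' (X ∩ W)) →
      Tendsto yk atTop (𝓝 y) →
      bTangentCone (h '' (X ∩ W)) y ⊆ innerLimit fun k => bTangentCone (h '' (X ∩ W)) (yk k)) :
    ∀ xk : ℕ → E, (∀ k, xk k ∈ X) → Tendsto xk atTop (𝓝 x) →
      bTangentCone X x ⊆ innerLimit fun k => bTangentCone X (xk k) := by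
  intro xk hxkX hxk v hv
  obtain ⟨hxX, hxW⟩ := hx
  set Y := h '' (X ∩ W) with hY
  -- differentiability facts
  have hdiffh : ∀ z ∈ W, HasFDerivAt h (fderiv ℝ h z) z := fun z hz =>
    (((hh.differentiableOn one_ne_zero) z hz).differentiableAt (hW.mem_nhds hz)).hasFDerivAt
  have hdiffg : ∀ z' ∈ h '' W, HasFDerivAt g (fderiv ℝ g z') z' := fun z' hz' =>
    (((hg.differentiableOn one_ne_zero) z' hz').differentiableAt (hWopen.mem_nhds hz')).hasFDerivAt
  have hdx := hdiffh x hxW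
  set y := h x with hy
  have hyW : y ∈ h '' W := ⟨x, hxW, rfl⟩
  have hyY : y ∈ Y := ⟨x, ⟨hxX, hxW⟩, rfl⟩
  -- push v forward
  have hv' : v ∈ bTangentCone (X ∩ W) x := btc_inter_open hW hxW hv
  have hAv : fderiv ℝ h x v ∈ bTangentCone Y y := btc_image hdx hv'
  -- eventually xk ∈ W
  obtain ⟨N, hN⟩ := eventually_atTop.1 (hxk.eventually (hW.eventually_mem hxW))
  have hxkW : ∀ k, xk (k + N) ∈ W := fun k => hN _ (Nat.le_add_left N k)
  -- the image sequence
  set yk : ℕ → E' := fun k => h (xk (k + N)) with hykdef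
  have hykY : ∀ k, yk k ∈ Y := fun k => ⟨xk (k + N), ⟨hxkX _, hxkW k⟩, rfl⟩
  have hconth : ContinuousAt h x := (hh.continuousOn x hxW).continuousAt (hW.mem_nhds hxW)
  have hyk : Tendsto yk atTop (𝓝 y) :=
    hconth.tendsto.comp ((tendsto_add_atTop_iff_nat N).2 hxk)
  -- regularity of Y gives the sequence wk
  obtain ⟨wk, hwkY, hwk⟩ := hreg y hyY yk hykY hyk hAv
  -- pull back
  have hgY : g '' Y = X ∩ W := by
    rw [hY, Set.image_image]
    have : ∀ z ∈ X ∩ W, g (h z) = z := fun z hz => hgh z hz.2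
    rw [Set.image_congr this]; exact Set.image_id _
  have hgyk : ∀ k, g (yk k) = xk (k + N) := fun k => hgh _ (hxkW k)
  have hukmem : ∀ k, fderiv ℝ g (yk k) (wk k) ∈ bTangentCone X (xk (k + N)) := by
    intro k
    have hd := hdiffg (yk k) ⟨xk (k + N), hxkW k, rfl⟩
    have := btc_image hd (hwkY k)
    rw [hgY, hgyk k] at this
    exact btc_mono Set.inter_subset_left _ this
  -- define vk
  set vk : ℕ → E := fun k => if N ≤ k then fderiv ℝ g (h (xk k)) (wk (k - N)) else 0 with hvkdef
  refine ⟨vk, ?_, ?_⟩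
  · intro k
    by_cases hk : N ≤ k
    · have hkey : h (xk k) = yk (k - N) := by rw [hykdef]; simp [Nat.sub_add_cancel hk]
      have := hukmem (k - N)
      rw [Nat.sub_add_cancel hk] at this
      simp only [hvkdef, if_pos hk, hkey]
      exact this
    · simp only [hvkdef, if_neg hk]
      exact zero_mem_btc (hxkX k)
  · rw [← tendsto_add_atTop_iff_nat N]
    have heq : ∀ k, vk (k + N) = fderiv ℝ g (yk k) (wk k) := by
      intro k
      simp only [hvkdef, if_pos (Nat.le_add_left N k), Nat.add_sub_cancel, hykdef]
    -- continuity of fderiv g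
    have hcontfg : ContinuousOn (fderiv ℝ g) (h '' W) :=
      hg.continuousOn_fderiv_of_isOpen hWopen le_rfl
    have hykW : ∀ k, yk k ∈ h '' W := fun k => ⟨xk (k + N), hxkW k, rfl⟩
    have hLk : Tendsto (fun k => fderiv ℝ g (yk k)) atTop (𝓝 (fderiv ℝ g y)) :=
      ((hcontfg y hyW).continuousAt (hWopen.mem_nhds hyW)).tendsto.comp hyk
    have happly : Tendsto (fun k => fderiv ℝ g (yk k) (wk k)) atTop
        (𝓝 (fderiv ℝ g y (fderiv ℝ h x v))) :=
      (isBoundedBilinearMap_apply.continuous.tendsto _).comp (hLk.prodMk_nhds hwk)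
    -- chain rule : fderiv g y ∘ fderiv h x = id
    have hchain : fderiv ℝ g y (fderiv ℝ h x v) = v := by
      have h1 : HasFDerivAt (g ∘ h) ((fderiv ℝ g y).comp (fderiv ℝ h x)) x :=
        (hdiffg y hyW).comp x hdx
      have h2 : HasFDerivAt (g ∘ h) (ContinuousLinearMap.id ℝ E) x := by
        have hev : g ∘ h =ᶠ[𝓝 x] id :=
          eventually_of_mem (hW.mem_nhds hxW) fun z hz => hgh z hz
        exact (hasFDerivAt_id x).congr_of_eventuallyEq hev
      have := h1.unique h2
      calc fderiv ℝ g y (fderiv ℝ h x v)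
          = ((fderiv ℝ g y).comp (fderiv ℝ h x)) v := rfl
        _ = (ContinuousLinearMap.id ℝ E) v := by rw [this]
        _ = v := rfl
    rw [hchain] at happly
    exact happly.congr fun k => (heq k).symm
end

section
/- Let E' and E be finite-dimensional real normed vector spaces, V ⊆ E' an open set, and h : E' → E a map that is continuously differentiable on V, such that h(V) is open in E and there is a map g : E → E', continuously differentiable on h(V), with g(h(z)) = z for all z ∈ V and h(g(z')) = z' for all z' ∈ h(V). Let Y ⊆ V, y ∈ Y, and x = h(y). Then the derivative D h(y) : E' → E is a bijective linear map, and it maps the tangent cone T_yY bijectively onto the tangent cone T_x(h(Y)); in particular, the image of T_yY under D h(y) equals T_x(h(Y)). -/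
open Filter Topology

lemma bTangentCone.map {E' E : Type*}
    [NormedAddCommGroup E'] [NormedSpace ℝ E']
    [NormedAddCommGroup E] [NormedSpace ℝ E]
    {f : E' → E} {f' : E' →L[ℝ] E} {y : E'} (hf : HasFDerivAt f f' y)
    {S : Set E'} {v : E'} (hv : v ∈ bTangentCone S y) :
    f' v ∈ bTangentCone (f '' S) (f y) := by
  obtain ⟨pk, τ, hmem, hpos, hτ0, hlim⟩ := hv
  have hτne : ∀ k, τ k ≠ 0 := fun k => (hpos k).ne'
  -- pk → y
  have hpk : Tendsto pk atTop (𝓝 y) := by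
    have h1 : Tendsto (fun k => τ k • ((τ k)⁻¹ • (pk k - y))) atTop (𝓝 ((0:ℝ) • v)) :=
      hτ0.smul hlim
    have h2 : (fun k => τ k • ((τ k)⁻¹ • (pk k - y))) = fun k => pk k - y := by
      funext k; rw [smul_smul, mul_inv_cancel₀ (hτne k), one_smul]
    rw [h2, zero_smul] at h1
    have := h1.add_const y
    simpa using this
  have ho : (fun k => f (pk k) - f y - f' (pk k - y)) =o[atTop] fun k => pk k - y :=
    hf.isLittleO.comp_tendsto hpk
  have hO : (fun k => pk k - y) =O[atTop] τ := by
    have h1 : (fun k => (τ k)⁻¹ • (pk k - y)) =O[atTop] (fun _ => (1:ℝ)) :=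
      hlim.isBigO_one ℝ
    have h2 := (Asymptotics.isBigO_refl τ atTop).smul h1
    have h3 : (fun k => τ k • ((τ k)⁻¹ • (pk k - y))) = fun k => pk k - y := by
      funext k; rw [smul_smul, mul_inv_cancel₀ (hτne k), one_smul]
    rw [h3] at h2
    simpa using h2
  have ho2 : (fun k => f (pk k) - f y - f' (pk k - y)) =o[atTop] τ := ho.trans_isBigO hO
  have herr : Tendsto (fun k => (τ k)⁻¹ • (f (pk k) - f y - f' (pk k - y))) atTop (𝓝 0) :=
    ho2.tendsto_inv_smul_nhds_zero
  have hlin : Tendsto (fun k => f' ((τ k)⁻¹ • (pk k - y))) atTop (𝓝 (f' v)) :=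
    (f'.continuous.tendsto v).comp hlim
  have hsum := herr.add hlin
  rw [zero_add] at hsum
  have heq : (fun k => (τ k)⁻¹ • (f (pk k) - f y - f' (pk k - y)) + f' ((τ k)⁻¹ • (pk k - y)))
      = fun k => (τ k)⁻¹ • (f (pk k) - f y) := by
    funext k
    rw [map_smul, smul_sub]
    abel
  rw [heq] at hsum
  exact ⟨fun k => f (pk k), τ, fun k => ⟨pk k, hmem k, rfl⟩, hpos, hτ0, hsum⟩

/-- Let `E'`, `E` be finite-dimensional real normed vector spaces, `V ⊆ E'` open,
and `h : E' → E` continuously differentiable on `V`, with `h(V)` open and a continuously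
differentiable inverse `g` on `h(V)`. Let `Y ⊆ V`, `y ∈ Y`, `x = h(y)`. Then the derivative
`D h(y) : E' → E` is a bijective linear map, and it maps the tangent cone `T_yY` bijectively onto
the tangent cone `T_x(h(Y))`; in particular the image of `T_yY` under `D h(y)` equals
`T_x(h(Y))`. -/
theorem stmt16 {E' E : Type*}
    [NormedAddCommGroup E'] [NormedSpace ℝ E'] [FiniteDimensional ℝ E']
    [NormedAddCommGroup E] [NormedSpace ℝ E] [FiniteDimensional ℝ E]
    (V : Set E') (hV : IsOpen V) (h : E' → E) (g : E → E')
    (hh : ContDiffOn ℝ 1 h V) (hVopen : IsOpen (h '' V)) (hg : ContDiffOn ℝ 1 g (h '' V))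
    (hgh : ∀ z ∈ V, g (h z) = z) (hhg : ∀ z' ∈ h '' V, h (g z') = z')
    (Y : Set E') (hY : Y ⊆ V) (y : E') (hy : y ∈ Y) :
    Function.Bijective (fderiv ℝ h y) ∧
    Set.BijOn (fderiv ℝ h y) (bTangentCone Y y) (bTangentCone (h '' Y) (h y)) ∧
    fderiv ℝ h y '' bTangentCone Y y = bTangentCone (h '' Y) (h y) := by
  have hyV : y ∈ V := hY hy
  have hxhV : h y ∈ h '' V := ⟨y, hyV, rfl⟩
  have hdh : HasFDerivAt h (fderiv ℝ h y) y :=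
    ((hh.contDiffAt (hV.mem_nhds hyV)).differentiableAt one_ne_zero).hasFDerivAt
  have hdg : HasFDerivAt g (fderiv ℝ g (h y)) (h y) :=
    ((hg.contDiffAt (hVopen.mem_nhds hxhV)).differentiableAt one_ne_zero).hasFDerivAt
  set f' := fderiv ℝ h y
  set g' := fderiv ℝ g (h y)
  -- g ∘ h = id near y
  have hcomp1 : HasFDerivAt (g ∘ h) (g'.comp f') y := hdg.comp y hdh
  have hid1 : HasFDerivAt (g ∘ h) (ContinuousLinearMap.id ℝ E') y := by
    have heq : g ∘ h =ᶠ[𝓝 y] id := by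
      filter_upwards [hV.mem_nhds hyV] with z hz using hgh z hz
    exact (hasFDerivAt_id y).congr_of_eventuallyEq heq
  have hgf : g'.comp f' = ContinuousLinearMap.id ℝ E' := hcomp1.unique hid1
  have hcomp2 : HasFDerivAt (h ∘ g) (f'.comp g') (h y) := by
    have : g (h y) = y := hgh y hyV
    rw [← this] at hdh
    exact hdh.comp (h y) hdg
  have hid2 : HasFDerivAt (h ∘ g) (ContinuousLinearMap.id ℝ E) (h y) := by
    have heq : h ∘ g =ᶠ[𝓝 (h y)] id := by
      filter_upwards [hVopen.mem_nhds hxhV] with z hz using hhg z hz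
    exact (hasFDerivAt_id (h y)).congr_of_eventuallyEq heq
  have hfg : f'.comp g' = ContinuousLinearMap.id ℝ E := hcomp2.unique hid2
  have hleft : Function.LeftInverse g' f' := fun v => by
    have := congrArg (fun T => T v) hgf; simpa using this
  have hright : Function.RightInverse g' f' := fun w => by
    have := congrArg (fun T => T w) hfg; simpa using this
  have hbij : Function.Bijective f' := ⟨hleft.injective, hright.surjective⟩
  have hmaps : Set.MapsTo f' (bTangentCone Y y) (bTangentCone (h '' Y) (h y)) :=
    fun v hv => bTangentCone.map hdh hv
  have hgmaps : ∀ w ∈ bTangentCone (h '' Y) (h y), g' w ∈ bTangentCone Y y := by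
    intro w hw
    have := bTangentCone.map hdg hw
    have himg : g '' (h '' Y) = Y := by
      rw [Set.image_image, Set.image_congr (fun z hz => hgh z (hY hz)), Set.image_id']
    rwa [himg, hgh y hyV] at this
  have hsurj : Set.SurjOn f' (bTangentCone Y y) (bTangentCone (h '' Y) (h y)) := by
    intro w hw
    exact ⟨g' w, hgmaps w hw, hright w⟩
  have hbijon : Set.BijOn f' (bTangentCone Y y) (bTangentCone (h '' Y) (h y)) :=
    ⟨hmaps, hleft.injective.injOn, hsurj⟩
  exact ⟨hbij, hbijon, hbijon.image_eq⟩
end
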